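/- Let G be an oriented graph on n vertices with underlying minimum degree δ(G) ≥ n/2 + 1. Let P = u_1 u_2 u_3 be a path and C = v_1...v_{n−3} v_1 a cycle, vertex-disjoint with V(G) = V(P) ∪ V(C), σ^-(P) ≤ 1 and σ^-(C) ≤ ℓ − 3. Then G contains a Hamilton cycle C* with σ_min(C*) ≤ ℓ. -/

import Mathlib

open Function

/-- An oriented graph: an asymmetric (hence irreflexive) relation, i.e. no 2-cycles. -/
def Oriented {V : Type*} (E : V → V → Prop) : Prop := ∀ u v, E u v → ¬ E v u

/-- Adjacency in the underlying undirected graph. -/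
def UAdj {V : Type*} (E : V → V → Prop) (u v : V) : Prop := E u v ∨ E v u

/-- Degree of a vertex in the underlying undirected graph. -/
noncomputable def udeg {V : Type*} (E : V → V → Prop) (x : V) : ℕ := Nat.card {y : V // UAdj E x y}

/-- Cyclic successor of an index. -/
def cnext {m : ℕ} (i : Fin m) : Fin m := ⟨(i.val + 1) % m, Nat.mod_lt _ i.pos⟩

/-- A Hamilton cycle of an oriented graph on `Fin n`, given as a cyclic listing of
all vertices (consecutive vertices, when distinct, are joined by an edge). -/
def IsHamCycle {n : ℕ} (E : Fin n → Fin n → Prop) (c : Fin n → Fin n) : Prop :=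
  Bijective c ∧ ∀ i : Fin n, c i ≠ c (cnext i) → UAdj E (c i) (c (cnext i))

/-- Number of forward edges of a Hamilton cycle. -/
noncomputable def sigmaPlusHC {n : ℕ} (E : Fin n → Fin n → Prop) (c : Fin n → Fin n) : ℕ :=
  Nat.card {i : Fin n // E (c i) (c (cnext i))}

/-- Number of backward edges of a Hamilton cycle. -/
noncomputable def sigmaMinusHC {n : ℕ} (E : Fin n → Fin n → Prop) (c : Fin n → Fin n) : ℕ :=
  Nat.card {i : Fin n // E (c (cnext i)) (c i)}

noncomputable def sigmaMaxHC {n : ℕ} (E : Fin n → Fin n → Prop) (c : Fin n → Fin n) : ℕ :=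
  max (sigmaPlusHC E c) (sigmaMinusHC E c)

noncomputable def sigmaMinHC {n : ℕ} (E : Fin n → Fin n → Prop) (c : Fin n → Fin n) : ℕ :=
  min (sigmaPlusHC E c) (sigmaMinusHC E c)

/-- A (not necessarily spanning) cycle on `m` vertices in an oriented graph on `Fin n`. -/
def IsCycleOn {n m : ℕ} (E : Fin n → Fin n → Prop) (c : Fin m → Fin n) : Prop :=
  3 ≤ m ∧ Injective c ∧ ∀ i : Fin m, UAdj E (c i) (c (cnext i))

noncomputable def sigmaPlusCyc {n m : ℕ} (E : Fin n → Fin n → Prop) (c : Fin m → Fin n) : ℕ :=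
  Nat.card {i : Fin m // E (c i) (c (cnext i))}

noncomputable def sigmaMinusCyc {n m : ℕ} (E : Fin n → Fin n → Prop) (c : Fin m → Fin n) : ℕ :=
  Nat.card {i : Fin m // E (c (cnext i)) (c i)}

noncomputable def sigmaMaxCyc {n m : ℕ} (E : Fin n → Fin n → Prop) (c : Fin m → Fin n) : ℕ :=
  max (sigmaPlusCyc E c) (sigmaMinusCyc E c)

noncomputable def sigmaMinCyc {n m : ℕ} (E : Fin n → Fin n → Prop) (c : Fin m → Fin n) : ℕ :=
  min (sigmaPlusCyc E c) (sigmaMinusCyc E c)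

/-- A path on `m + 1` vertices (`m` edges) in an oriented graph on `Fin n`. -/
def IsPathOn {n m : ℕ} (E : Fin n → Fin n → Prop) (p : Fin (m + 1) → Fin n) : Prop :=
  Injective p ∧ ∀ i : Fin m, UAdj E (p i.castSucc) (p i.succ)

noncomputable def sigmaPlusPath {n m : ℕ} (E : Fin n → Fin n → Prop) (p : Fin (m + 1) → Fin n) : ℕ :=
  Nat.card {i : Fin m // E (p i.castSucc) (p i.succ)}

noncomputable def sigmaMinusPath {n m : ℕ} (E : Fin n → Fin n → Prop) (p : Fin (m + 1) → Fin n) : ℕ :=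
  Nat.card {i : Fin m // E (p i.succ) (p i.castSucc)}

noncomputable def sigmaMaxPath {n m : ℕ} (E : Fin n → Fin n → Prop) (p : Fin (m + 1) → Fin n) : ℕ :=
  max (sigmaPlusPath E p) (sigmaMinusPath E p)

noncomputable def sigmaMinPath {n m : ℕ} (E : Fin n → Fin n → Prop) (p : Fin (m + 1) → Fin n) : ℕ :=
  min (sigmaPlusPath E p) (sigmaMinusPath E p)

/-- **Lemma, case `s = 3`.** `δ(G) ≥ n/2 + 1`, `P = u₁u₂u₃` a path with `σ⁻(P) ≤ 1`,
`C` a cycle on the remaining `n - 3` vertices with `σ⁻(C) ≤ ℓ - 3`. Then `G` has a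
Hamilton cycle `C*` with `σ_min(C*) ≤ ℓ`. -/
theorem path_cycle_insert_base_three (n ℓ δ : ℕ)
    (E : Fin n → Fin n → Prop) (hE : Oriented E)
    (hδlb : ∀ x : Fin n, δ ≤ udeg E x) (hδ : n + 2 ≤ 2 * δ)
    (p : Fin (2 + 1) → Fin n) (hp : IsPathOn E p) (hpσ : sigmaMinusPath E p ≤ 1)
    (c : Fin (n - 3) → Fin n) (hc : IsCycleOn E c)
    (hdisj : ∀ i j, c i ≠ p j)
    (hcover : ∀ x : Fin n, (∃ i, c i = x) ∨ (∃ j, p j = x))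
    (hσC : sigmaMinusCyc E c + 3 ≤ ℓ) :
    ∃ C : Fin n → Fin n, IsHamCycle E C ∧ sigmaMinHC E C ≤ ℓ := by
  classical
  obtain ⟨hm3, hcinj, hcedge⟩ := hc
  obtain ⟨hpinj, hpedge⟩ := hp
  have hn6 : 6 ≤ n := by omega
  obtain ⟨m, rfl⟩ : ∃ m, n = m + 3 := ⟨n - 3, by omega⟩
  -- re-type the cycle over `Fin m`
  let c' : Fin m → Fin (m + 3) := c
  have hm : 3 ≤ m := hm3
  have hm0 : 0 < m := by omega
  have hcinj' : Injective c' := hcinj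
  have hcedge' : ∀ i : Fin m, UAdj E (c' i) (c' (cnext i)) := hcedge
  have hdisj' : ∀ i j, c' i ≠ p j := hdisj
  have hcover' : ∀ x : Fin (m + 3), (∃ i, c' i = x) ∨ (∃ j, p j = x) := hcover
  have hσC' : sigmaMinusCyc E c' + 3 ≤ ℓ := hσC
  clear hm3 hcinj hcedge hdisj hcover hσC hn6
  have hmod : ∀ a j1 j2 : ℕ, j1 < m → j2 < m → (a + j1) % m = (a + j2) % m → j1 = j2 := by
    intro a j1 j2 h1 h2 h
    have h' := Nat.ModEq.add_left_cancel' (c := a) h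
    rwa [Nat.ModEq, Nat.mod_eq_of_lt h1, Nat.mod_eq_of_lt h2] at h'
  have hirr : ∀ x : Fin (m + 3), ¬ UAdj E x x := by
    intro x h
    rcases h with h | h <;> exact hE _ _ h h
  have hsurj : ∀ i' : Fin m, ∃ k : Fin m, cnext k = i' := by
    intro i'
    refine ⟨⟨(i'.val + m - 1) % m, Nat.mod_lt _ hm0⟩, ?_⟩
    apply Fin.ext
    show ((i'.val + m - 1) % m + 1) % m = i'.val
    rw [Nat.mod_add_mod, show i'.val + m - 1 + 1 = i'.val + m from by omega,
      Nat.add_mod_right, Nat.mod_eq_of_lt i'.isLt]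
  have hudeg : ∀ x : Fin (m + 3), udeg E x = (Finset.univ.filter fun y => UAdj E x y).card := by
    intro x
    rw [udeg, Nat.card_eq_fintype_card, Fintype.card_subtype]
  set A : Finset (Fin m) := Finset.univ.filter fun i => UAdj E (p 0) (c' i) with hAdef
  set B : Finset (Fin m) := Finset.univ.filter fun i => UAdj E (p 2) (c' (cnext i)) with hBdef
  have hAcard : δ ≤ A.card + 2 := by
    have hsub : (Finset.univ.filter fun y => UAdj E (p 0) y) ⊆
        A.image c' ∪ {p 1, p 2} := by
      intro y hy
      rw [Finset.mem_filter] at hy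
      rcases hcover' y with ⟨k, rfl⟩ | ⟨j, rfl⟩
      · exact Finset.mem_union_left _ (Finset.mem_image_of_mem c'
          (Finset.mem_filter.2 ⟨Finset.mem_univ _, hy.2⟩))
      · apply Finset.mem_union_right
        fin_cases j
        · exact absurd hy.2 (hirr _)
        · simp
        · simp
    calc δ ≤ udeg E (p 0) := hδlb _
      _ = _ := hudeg _
      _ ≤ (A.image c' ∪ {p 1, p 2}).card := Finset.card_le_card hsub
      _ ≤ (A.image c').card + ({p 1, p 2} : Finset (Fin (m+3))).card := Finset.card_union_le _ _
      _ ≤ A.card + 2 := add_le_add Finset.card_image_le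
          ((Finset.card_insert_le _ _).trans (by simp))
  have hBcard : δ ≤ B.card + 2 := by
    have hsub : (Finset.univ.filter fun y => UAdj E (p 2) y) ⊆
        B.image (fun k => c' (cnext k)) ∪ {p 0, p 1} := by
      intro y hy
      rw [Finset.mem_filter] at hy
      rcases hcover' y with ⟨k, rfl⟩ | ⟨j, rfl⟩
      · obtain ⟨k0, rfl⟩ := hsurj k
        exact Finset.mem_union_left _ (Finset.mem_image_of_mem _
          (Finset.mem_filter.2 ⟨Finset.mem_univ _, hy.2⟩))
      · apply Finset.mem_union_right
        fin_cases j
        · simp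
        · simp
        · exact absurd hy.2 (hirr _)
    calc δ ≤ udeg E (p 2) := hδlb _
      _ = _ := hudeg _
      _ ≤ (B.image (fun k => c' (cnext k)) ∪ {p 0, p 1}).card := Finset.card_le_card hsub
      _ ≤ (B.image (fun k => c' (cnext k))).card + ({p 0, p 1} : Finset (Fin (m+3))).card :=
          Finset.card_union_le _ _
      _ ≤ B.card + 2 := add_le_add Finset.card_image_le
          ((Finset.card_insert_le _ _).trans (by simp))
  have hABne : (A ∩ B).Nonempty := by
    rw [← Finset.card_pos]
    have h1 := Finset.card_union_add_card_inter A B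
    have h2 : (A ∪ B).card ≤ m := by
      calc (A ∪ B).card ≤ (Finset.univ : Finset (Fin m)).card := Finset.card_le_univ _
        _ = m := by simp
    omega
  obtain ⟨i, hiAB⟩ := hABne
  rw [Finset.mem_inter, hAdef, hBdef, Finset.mem_filter, Finset.mem_filter] at hiAB
  obtain ⟨⟨-, hi1⟩, ⟨-, hi2⟩⟩ := hiAB
  -- the Hamilton cycle
  set C : Fin (m + 3) → Fin (m + 3) := fun j =>
    if j.val < m then c' ⟨(i.val + 1 + j.val) % m, Nat.mod_lt _ hm0⟩
    else p ⟨j.val - m, by have := j.isLt; omega⟩ with hCdef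
  have hCc : ∀ (j : Fin (m + 3)) (h : j.val < m),
      C j = c' ⟨(i.val + 1 + j.val) % m, Nat.mod_lt _ hm0⟩ := fun j h => if_pos h
  have hCp : ∀ (j : Fin (m + 3)) (h : ¬ j.val < m),
      C j = p ⟨j.val - m, by have := j.isLt; omega⟩ := fun j h => if_neg h
  have hCpath : ∀ (j : Fin (m + 3)) (h : ¬ j.val < m) (k : Fin (2 + 1))
      (hk : j.val - m = k.val), C j = p k := by
    intro j h k hk
    rw [hCp j h]
    congr 1
    exact Fin.ext hk
  have hnext : ∀ (j : Fin (m + 3)) (h : j.val + 1 < m + 3), (cnext j) = ⟨j.val + 1, h⟩ :=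
    fun j h => Fin.ext (Nat.mod_eq_of_lt h)
  have hnlast : ∀ (j : Fin (m + 3)) (h : j.val = m + 2), cnext j = ⟨0, by omega⟩ := by
    intro j h
    apply Fin.ext
    show (j.val + 1) % (m + 3) = 0
    rw [h]
    simp
  have hck : ∀ v : ℕ, cnext (⟨v % m, Nat.mod_lt _ hm0⟩ : Fin m)
      = ⟨(v + 1) % m, Nat.mod_lt _ hm0⟩ := by
    intro v
    apply Fin.ext
    show (v % m + 1) % m = (v + 1) % m
    exact Nat.mod_add_mod v m 1
  have hstep : ∀ (j : Fin (m + 3)) (h : j.val + 1 < m),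
      C (cnext j) = c' (cnext ⟨(i.val + 1 + j.val) % m, Nat.mod_lt _ hm0⟩) := by
    intro j h
    have hlt : j.val + 1 < m + 3 := by omega
    rw [hnext j hlt, hCc ⟨j.val + 1, hlt⟩ h, hck (i.val + 1 + j.val)]
    rfl
  have hCi : ∀ (j : Fin (m + 3)) (h : j.val + 1 = m), C j = c' i := by
    intro j h
    rw [hCc j (by omega)]
    congr 1
    apply Fin.ext
    show (i.val + 1 + j.val) % m = i.val
    rw [show i.val + 1 + j.val = i.val + m from by omega, Nat.add_mod_right,
      Nat.mod_eq_of_lt i.isLt]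
  have hpe : ∀ (k : Fin 2) (k1 k2 : Fin (2 + 1)), k1.val = k.val → k2.val = k.val + 1 →
      UAdj E (p k1) (p k2) := by
    intro k k1 k2 h1 h2
    have e1 : k1 = k.castSucc := Fin.ext (by simpa using h1)
    have e2 : k2 = k.succ := Fin.ext (by simpa using h2)
    rw [e1, e2]
    exact hpedge k
  -- injectivity
  have hCinj : Injective C := by
    intro j1 j2 hEq
    by_cases h1 : j1.val < m <;> by_cases h2 : j2.val < m
    · rw [hCc _ h1, hCc _ h2] at hEq
      have := congrArg Fin.val (hcinj' hEq)
      simp only at this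
      exact Fin.ext (hmod (i.val + 1) _ _ h1 h2 this)
    · rw [hCc _ h1, hCp _ h2] at hEq
      exact absurd hEq (hdisj' _ _)
    · rw [hCp _ h1, hCc _ h2] at hEq
      exact absurd hEq.symm (hdisj' _ _)
    · rw [hCp _ h1, hCp _ h2] at hEq
      have := congrArg Fin.val (hpinj hEq)
      simp only at this
      have hj1 := j1.isLt
      have hj2 := j2.isLt
      exact Fin.ext (by omega)
  -- edges
  have hUAdj : ∀ j : Fin (m + 3), UAdj E (C j) (C (cnext j)) := by
    intro j
    have hj := j.isLt
    rcases lt_or_ge (j.val + 1) m with h | h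
    · rw [hCc j (by omega), hstep j h]
      exact hcedge' _
    rcases Nat.lt_or_ge j.val m with h1 | h1
    · -- j.val + 1 = m
      have hjm : j.val + 1 = m := by omega
      have hlt : j.val + 1 < m + 3 := by omega
      rw [hCi j hjm, hnext j hlt,
        hCpath ⟨j.val + 1, hlt⟩ (by simp; omega) 0 (by simp [Fin.ext_iff]; omega)]
      exact hi1.symm
    rcases Nat.lt_or_ge j.val (m + 2) with h2 | h2
    · rcases Nat.lt_or_ge j.val (m + 1) with h3 | h3
      · -- j.val = m : edge p0 p1
        have hlt : j.val + 1 < m + 3 := by omega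
        rw [hCpath j (by omega) ⟨0, by omega⟩ (by simp; omega), hnext j hlt,
          hCpath ⟨j.val + 1, hlt⟩ (by simp; omega) ⟨1, by omega⟩ (by simp; omega)]
        exact hpe ⟨0, by omega⟩ _ _ rfl rfl
      · -- j.val = m + 1 : edge p1 p2
        have hlt : j.val + 1 < m + 3 := by omega
        rw [hCpath j (by omega) ⟨1, by omega⟩ (by simp; omega), hnext j hlt,
          hCpath ⟨j.val + 1, hlt⟩ (by simp; omega) ⟨2, by omega⟩ (by simp; omega)]
        exact hpe ⟨1, by omega⟩ _ _ rfl rfl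
    · -- j.val = m + 2, wrap to c' (cnext i)
      have hjm : j.val = m + 2 := by omega
      rw [hCpath j (by omega) 2 (by simp [Fin.ext_iff]; omega), hnlast j hjm,
        hCc ⟨0, by omega⟩ (by simpa using hm0)]
      have e : (⟨(i.val + 1 + (⟨0, by omega⟩ : Fin (m+3)).val) % m, Nat.mod_lt _ hm0⟩ : Fin m)
          = cnext i := by
        apply Fin.ext
        show (i.val + 1 + 0) % m = (i.val + 1) % m
        rfl
      rw [e]
      exact hi2
  -- backward edge count
  set S : Finset (Fin (m + 3)) := Finset.univ.filter (fun j => E (C (cnext j)) (C j)) with hSdef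
  have hminus : sigmaMinusHC E C = S.card := by
    rw [sigmaMinusHC, Nat.card_eq_fintype_card, Fintype.card_subtype]
  set T1 : Finset (Fin m) := Finset.univ.filter (fun k => E (c' (cnext k)) (c' k)) with hT1def
  set T2 : Finset (Fin 2) := Finset.univ.filter (fun k : Fin 2 => E (p k.succ) (p k.castSucc))
    with hT2def
  have hTc : sigmaMinusCyc E c' = T1.card := by
    rw [sigmaMinusCyc, Nat.card_eq_fintype_card, Fintype.card_subtype]
  have hTp : sigmaMinusPath E p = T2.card := by
    rw [sigmaMinusPath, Nat.card_eq_fintype_card, Fintype.card_subtype]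
  set S1 : Finset (Fin (m + 3)) := S.filter (fun j => j.val + 1 < m) with hS1def
  set S2 : Finset (Fin (m + 3)) := S.filter (fun j => m ≤ j.val ∧ j.val ≤ m + 1) with hS2def
  have hSsub : S ⊆ S1 ∪ S2 ∪ {⟨m - 1, by omega⟩, ⟨m + 2, by omega⟩} := by
    intro j hj
    have hjlt := j.isLt
    rcases lt_or_ge (j.val + 1) m with h | h
    · exact Finset.mem_union_left _ (Finset.mem_union_left _ (Finset.mem_filter.2 ⟨hj, h⟩))
    rcases Nat.lt_or_ge j.val m with h1 | h1
    · apply Finset.mem_union_right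
      simp only [Finset.mem_insert, Finset.mem_singleton]
      left
      exact Fin.ext (by simp; omega)
    rcases Nat.lt_or_ge j.val (m + 2) with h2 | h2
    · exact Finset.mem_union_left _ (Finset.mem_union_right _
        (Finset.mem_filter.2 ⟨hj, by omega⟩))
    · apply Finset.mem_union_right
      simp only [Finset.mem_insert, Finset.mem_singleton]
      right
      exact Fin.ext (by simp; omega)
  have hS1 : S1.card ≤ T1.card := by
    apply Finset.card_le_card_of_injOn
      (fun j => (⟨(i.val + 1 + j.val) % m, Nat.mod_lt _ hm0⟩ : Fin m))
    · intro j hj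
      rw [hS1def, Finset.mem_coe, Finset.mem_filter, hSdef, Finset.mem_filter] at hj
      obtain ⟨⟨-, hEj⟩, hjm⟩ := hj
      rw [hCc j (by omega), hstep j hjm] at hEj
      exact Finset.mem_filter.2 ⟨Finset.mem_univ _, hEj⟩
    · intro j1 hj1 j2 hj2 hEq
      simp only [Finset.mem_coe, hS1def, Finset.mem_filter] at hj1 hj2
      have hv : (i.val + 1 + j1.val) % m = (i.val + 1 + j2.val) % m := congrArg Fin.val hEq
      exact Fin.ext (hmod (i.val + 1) _ _ (by omega) (by omega) hv)
  have hS2 : S2.card ≤ T2.card := by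
    apply Finset.card_le_card_of_injOn
      (fun j => (⟨min (j.val - m) 1, by omega⟩ : Fin 2))
    · intro j hj
      rw [hS2def, Finset.mem_coe, Finset.mem_filter, hSdef, Finset.mem_filter] at hj
      obtain ⟨⟨-, hEj⟩, hjm⟩ := hj
      have hjlt := j.isLt
      have hlt : j.val + 1 < m + 3 := by omega
      rw [hCpath j (by omega) ⟨j.val - m, by omega⟩ rfl, hnext j hlt,
        hCpath ⟨j.val + 1, hlt⟩ (by simp; omega) ⟨j.val + 1 - m, by omega⟩ (by simp)] at hEj
      apply Finset.mem_filter.2 ⟨Finset.mem_univ _, ?_⟩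
      have e1 : (⟨min (j.val - m) 1, by omega⟩ : Fin 2).succ
          = (⟨j.val + 1 - m, by omega⟩ : Fin (2+1)) :=
        Fin.ext (by simp [Fin.val_succ]; omega)
      have e2 : (⟨min (j.val - m) 1, by omega⟩ : Fin 2).castSucc
          = (⟨j.val - m, by omega⟩ : Fin (2+1)) :=
        Fin.ext (by simp; omega)
      rw [e1, e2]
      exact hEj
    · intro j1 hj1 j2 hj2 hEq
      simp only [Finset.mem_coe, hS2def, Finset.mem_filter] at hj1 hj2
      have hv : min (j1.val - m) 1 = min (j2.val - m) 1 := congrArg Fin.val hEq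
      have h1' := hj1.2
      have h2' := hj2.2
      exact Fin.ext (by omega)
  have hScard : S.card ≤ T1.card + T2.card + 2 := by
    calc S.card ≤ (S1 ∪ S2 ∪ {⟨m - 1, by omega⟩, ⟨m + 2, by omega⟩} : Finset (Fin (m+3))).card :=
        Finset.card_le_card hSsub
      _ ≤ (S1 ∪ S2).card + ({⟨m - 1, by omega⟩, ⟨m + 2, by omega⟩} : Finset (Fin (m+3))).card :=
        Finset.card_union_le _ _
      _ ≤ (S1.card + S2.card) + 2 := add_le_add (Finset.card_union_le _ _)
          ((Finset.card_insert_le _ _).trans (by simp))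
      _ ≤ T1.card + T2.card + 2 := by omega
  refine ⟨C, ⟨⟨hCinj, (Finite.injective_iff_bijective.mp hCinj).2⟩, fun j _ => hUAdj j⟩, ?_⟩
  have hfin : sigmaMinusHC E C ≤ ℓ := by
    rw [hminus]
    rw [hTc] at hσC'
    rw [hTp] at hpσ
    omega
  calc sigmaMinHC E C ≤ sigmaMinusHC E C := min_le_right _ _
    _ ≤ ℓ := hfin
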